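/- The greedy set cover algorithm, which repeatedly picks the set covering the maximum number of yet-uncovered elements, returns a cover of size at most (ln n + 1) times the size of a minimum cover, where n is the number of elements in the universe. -/

import Mathlib

private lemma foldr_union_init {α : Type*} [DecidableEq α] (l : List (Finset α)) (b : Finset α) :
    l.foldr (· ∪ ·) b = l.foldr (· ∪ ·) ∅ ∪ b := by
  induction l with
  | nil => simp
  | cons a l ih => simp only [List.foldr_cons, ih, Finset.union_assoc]

private lemma foldr_union_subset {α : Type*} [DecidableEq α] (l : List (Finset α)) (U : Finset α)
    (h : ∀ A ∈ l, A ⊆ U) : l.foldr (· ∪ ·) ∅ ⊆ U := by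
  induction l with
  | nil => simp
  | cons a l ih =>
    simp only [List.foldr_cons, Finset.union_subset_iff]
    exact ⟨h a (by simp), ih fun A hA => h A (by simp [hA])⟩

/-- The greedy set cover algorithm (repeatedly picking the set covering
the maximum number of yet-uncovered elements, until the universe `U` is covered)
returns a cover of size at most `(ln n + 1)` times the size of a minimum cover,
where `n = |U| ≥ 1`. The greedy run is encoded by the list `gs` of chosen sets. -/
theorem greedy_set_cover_ln_approx {α : Type*} [DecidableEq α]
    (U : Finset α) (F : Finset (Finset α))
    (hn : 1 ≤ U.card)
    (hF : ∀ A ∈ F, A ⊆ U)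
    (hcover : F.sup id = U)
    (gs : List (Finset α))
    (hmem : ∀ A ∈ gs, A ∈ F)
    (hnotdone : ∀ i, i < gs.length → (gs.take i).foldr (· ∪ ·) ∅ ≠ U)
    (hgreedy : ∀ i (h : i < gs.length), ∀ A ∈ F,
      (A \ (gs.take i).foldr (· ∪ ·) ∅).card ≤
        ((gs.get ⟨i, h⟩) \ (gs.take i).foldr (· ∪ ·) ∅).card)
    (hdone : gs.foldr (· ∪ ·) ∅ = U) :
    ∀ G ⊆ F, G.sup id = U → (gs.length : ℝ) ≤ (Real.log U.card + 1) * G.card := by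
  intro G hGF hGcov
  set L := gs.length with hL
  set cov : ℕ → Finset α := fun i => (gs.take i).foldr (· ∪ ·) ∅ with hcovdef
  set u : ℕ → ℕ := fun i => (U \ cov i).card with hudef
  set k := G.card with hk
  -- k ≥ 1
  have hk1 : 1 ≤ k := by
    rcases G.eq_empty_or_nonempty with h | h
    · exfalso
      rw [h] at hGcov
      simp only [Finset.sup_empty] at hGcov
      rw [← hGcov] at hn
      simp at hn
    · exact Finset.card_pos.mpr h
  have hkR : (0:ℝ) < (k:ℝ) := by exact_mod_cast hk1
  have hkR1 : (1:ℝ) ≤ (k:ℝ) := by exact_mod_cast hk1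
  have hnR : (1:ℝ) ≤ (U.card:ℝ) := by exact_mod_cast hn
  have hlogn : 0 ≤ Real.log U.card := Real.log_nonneg hnR
  -- cov successor
  have hcovsucc : ∀ i (h : i < L), cov (i+1) = cov i ∪ gs.get ⟨i, h⟩ := by
    intro i h
    have h1 : gs.take (i+1) = gs.take i ++ [gs.get ⟨i, h⟩] := by
      rw [List.take_succ]
      congr 1
      simp [List.getElem?_eq_getElem h]
    simp only [hcovdef, h1, List.foldr_append, List.foldr_cons, List.foldr_nil]
    rw [foldr_union_init]
    simp
  have hcovsub : ∀ i, cov i ⊆ U := by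
    intro i
    apply foldr_union_subset
    intro A hA
    exact hF A (hmem A (List.mem_of_mem_take hA))
  -- key counting step
  have hstep : ∀ i (h : i < L), k * u (i+1) + u i ≤ k * u i := by
    intro i h
    set g := gs.get ⟨i, h⟩ with hg
    set C := cov i with hC
    have hgF : g ∈ F := hmem g (List.get_mem gs ⟨i, h⟩)
    have hgU : g ⊆ U := hF g hgF
    set d := (g \ C).card with hd
    -- u i ≤ k * d
    have hsum : u i ≤ k * d := by
      have hsub : U \ C ⊆ G.biUnion (fun A => A \ C) := by
        intro x hx
        rw [Finset.mem_sdiff] at hx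
        have hxU : x ∈ G.sup id := hGcov ▸ hx.1
        rw [Finset.mem_sup] at hxU
        obtain ⟨A, hA, hxA⟩ := hxU
        exact Finset.mem_biUnion.mpr ⟨A, hA, Finset.mem_sdiff.mpr ⟨hxA, hx.2⟩⟩
      calc u i ≤ (G.biUnion (fun A => A \ C)).card := Finset.card_le_card hsub
        _ ≤ ∑ A ∈ G, (A \ C).card := Finset.card_biUnion_le
        _ ≤ ∑ _A ∈ G, d := Finset.sum_le_sum fun A hA => hgreedy i h A (hGF hA)
        _ = k * d := by rw [Finset.sum_const, smul_eq_mul]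
    -- u (i+1) + d = u i
    have hrec : u (i+1) + d = u i := by
      have h1 : U \ cov (i+1) = (U \ C) \ g := by
        rw [hcovsucc i h]
        ext x
        simp only [Finset.mem_sdiff, Finset.mem_union, ← hC]
        tauto
      have h2 : (U \ C) ∩ g = g \ C := by
        ext x
        simp only [Finset.mem_sdiff, Finset.mem_inter]
        constructor
        · tauto
        · intro hx
          exact ⟨⟨hgU hx.1, hx.2⟩, hx.1⟩
      have := Finset.card_sdiff_add_card_inter (U \ C) g
      rw [h2] at this
      simpa [hudef, h1, hd] using this
    calc k * u (i+1) + u i ≤ k * u (i+1) + k * d := by omega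
      _ = k * (u (i+1) + d) := by ring
      _ = k * u i := by rw [hrec]
  -- real decay bound
  have key : ∀ i, i ≤ L → (u i : ℝ) ≤ (U.card : ℝ) * (1 - 1/(k:ℝ))^i := by
    intro i
    induction i with
    | zero => simp [hudef, hcovdef]
    | succ i ih =>
      intro hiL
      have hi : i < L := hiL
      have ih' := ih (le_of_lt hi)
      have hs := hstep i hi
      have hsR : (k:ℝ) * u (i+1) + u i ≤ k * u i := by exact_mod_cast hs
      have h1 : (u (i+1) : ℝ) ≤ (1 - 1/(k:ℝ)) * u i := by
        have hne : (k:ℝ) ≠ 0 := ne_of_gt hkR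
        rw [show (1 - 1/(k:ℝ)) * u i = ((k:ℝ) * u i - u i)/k by field_simp,
          le_div_iff₀ hkR]
        linarith
      have hbase : (0:ℝ) ≤ 1 - 1/(k:ℝ) := by
        have : 1/(k:ℝ) ≤ 1 := by rw [div_le_one hkR]; exact hkR1
        linarith
      calc (u (i+1) : ℝ) ≤ (1 - 1/(k:ℝ)) * u i := h1
        _ ≤ (1 - 1/(k:ℝ)) * ((U.card : ℝ) * (1 - 1/(k:ℝ))^i) :=
            mul_le_mul_of_nonneg_left ih' hbase
        _ = (U.card : ℝ) * (1 - 1/(k:ℝ))^(i+1) := by ring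
  -- conclude
  rcases Nat.eq_zero_or_pos L with hL0 | hL1
  · rw [hL0]
    push_cast
    positivity
  · set m := L - 1 with hm
    have hmL : m < L := by omega
    have hLm : L = m + 1 := by omega
    -- u m ≥ 1
    have hum : 1 ≤ u m := by
      have hne : cov m ≠ U := hnotdone m hmL
      have : ¬ U ⊆ cov m := fun hsub =>
        hne (Finset.Subset.antisymm (hcovsub m) hsub)
      exact Finset.card_pos.mpr (Finset.sdiff_nonempty.mpr this)
    have humR : (1:ℝ) ≤ (u m : ℝ) := by exact_mod_cast hum
    have h2 : (1:ℝ) ≤ (U.card : ℝ) * (1 - 1/(k:ℝ))^m :=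
      le_trans humR (key m (le_of_lt hmL))
    have hbase : (0:ℝ) ≤ 1 - 1/(k:ℝ)  := by
      have : 1/(k:ℝ) ≤ 1 := by rw [div_le_one hkR]; exact hkR1
      linarith
    have h3 : (1 - 1/(k:ℝ))^m ≤ Real.exp (-((m:ℝ)/k)) := by
      have hx : 1 - 1/(k:ℝ) ≤ Real.exp (-(1/(k:ℝ))) := by
        have := Real.add_one_le_exp (-(1/(k:ℝ)))
        linarith
      calc (1 - 1/(k:ℝ))^m ≤ (Real.exp (-(1/(k:ℝ))))^m := pow_le_pow_left₀ hbase hx m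
        _ = Real.exp (-((m:ℝ)/k)) := by
          rw [← Real.exp_nat_mul]
          congr 1
          ring
    have h4 : (1:ℝ) ≤ (U.card : ℝ) * Real.exp (-((m:ℝ)/k)) := by
      calc (1:ℝ) ≤ (U.card : ℝ) * (1 - 1/(k:ℝ))^m := h2
        _ ≤ (U.card : ℝ) * Real.exp (-((m:ℝ)/k)) :=
            mul_le_mul_of_nonneg_left h3 (by linarith)
    have h5 : Real.exp ((m:ℝ)/k) ≤ (U.card : ℝ) := by
      have hep : (0:ℝ) < Real.exp ((m:ℝ)/k) := Real.exp_pos _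
      have := mul_le_mul_of_nonneg_right h4 hep.le
      rwa [one_mul, mul_assoc, ← Real.exp_add, neg_add_cancel, Real.exp_zero, mul_one] at this
    have h6 : (m:ℝ)/k ≤ Real.log U.card :=
      (Real.le_log_iff_exp_le (by linarith)).mpr h5
    have h7 : (m:ℝ) ≤ k * Real.log U.card := by
      rw [div_le_iff₀ hkR] at h6
      linarith [h6]
    have hLcast : (L:ℝ) = (m:ℝ) + 1 := by
      rw [hLm]; push_cast; ring
    rw [hLcast]
    have : (Real.log U.card + 1) * k = k * Real.log U.card + k := by ring
    rw [this]
    linarith
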